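/- Let R be a commutative Noetherian integral domain, n ≥ 2 an integer, and M a finitely generated R[n]-module. The following are equivalent: (i) the composition 𝛌(M) = λ_1 ∘ ... ∘ λ_{n-1} : G^{(n)}(M) → G^{(1)}(M) is surjective; (ii) λ_1, ..., λ_{n-1} are all surjective; (iii) μ_0, ..., μ_{n-2} are all injective; (iv) the composition 𝛍(M) = μ_{n-2} ∘ ... ∘ μ_0 : G_0(M) → G_{n-1}(M) is injective. Moreover, if these conditions hold, then all the maps λ_1, ..., λ_{n-1}, μ_0, ..., μ_{n-2}, 𝛌(M) and 𝛍(M) are isomorphisms. -/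

import Mathlib

open Polynomial

noncomputable section

/-- The primitive multiple ring `R[n] = R[t]/(t^n)`. -/
abbrev Rn (R : Type*) [CommRing R] (n : ℕ) : Type _ :=
  Polynomial R ⧸ Ideal.span {(X : Polynomial R) ^ n}

/-- The class `t` of the variable in `R[n]`. -/
def tn (R : Type*) [CommRing R] (n : ℕ) : Rn R n :=
  Ideal.Quotient.mk _ X

/-- `R[k] = R[n]/(t^k)` as an `R[n]`-module (for `k ≤ n` this is `R[t]/(t^k)`
with the `R[n]`-module structure coming from the natural surjection `R[n] → R[k]`). -/
abbrev Rmod (R : Type*) [CommRing R] (n k : ℕ) : Type _ :=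
  Rn R n ⧸ (Ideal.span {tn R n ^ k})

/-- The constant term homomorphism `R[n] → R` (for `n > 0`). -/
def ct (R : Type*) [CommRing R] (n : ℕ) (hn : 0 < n) : Rn R n →+* R :=
  Ideal.Quotient.lift _ (evalRingHom 0) (by
    intro a ha
    rw [Ideal.mem_span_singleton] at ha
    obtain ⟨c, rfl⟩ := ha
    simp [zero_pow hn.ne'])

section Modules

variable (R : Type*) [CommRing R] (n : ℕ) (M : Type*) [AddCommGroup M] [Module (Rn R n) M]

/-- The submodule `M_i = t^i M` of an `R[n]`-module `M`. -/
def tMi (i : ℕ) : Submodule (Rn R n) M :=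
  LinearMap.range (LinearMap.lsmul (Rn R n) M (tn R n ^ i))

/-- The submodule `M^{(i)} = {m ∈ M : t^i m = 0}` of an `R[n]`-module `M`. -/
def kt (i : ℕ) : Submodule (Rn R n) M :=
  LinearMap.ker (LinearMap.lsmul (Rn R n) M (tn R n ^ i))

/-- `G_i(M) = t^i M / t^{i+1} M`. -/
abbrev Gi (i : ℕ) :=
  (tMi R n M i) ⧸ (Submodule.comap (tMi R n M i).subtype (tMi R n M (i + 1)))

/-- `G^{(i+1)}(M) = M^{(i+1)}/M^{(i)}` (note the shift by one in the indexing: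
`Gup R n M i` is `G^{(i+1)}(M)`). -/
abbrev Gup (i : ℕ) :=
  (kt R n M (i + 1)) ⧸ (Submodule.comap (kt R n M (i + 1)).subtype (kt R n M i))

lemma tMi_succ_mem {i : ℕ} {x : M} (hx : x ∈ tMi R n M i) :
    tn R n • x ∈ tMi R n M (i + 1) := by
  obtain ⟨m, rfl⟩ := hx
  exact ⟨m, by simp [LinearMap.lsmul_apply, smul_smul, pow_succ']⟩

lemma kt_pred_mem {i : ℕ} {x : M} (hx : x ∈ kt R n M (i + 1)) :
    tn R n • x ∈ kt R n M i := by
  simp only [kt, LinearMap.mem_ker, LinearMap.lsmul_apply] at hx ⊢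
  rw [smul_smul, ← pow_succ]
  exact hx

/-- `μ_i : G_i(M) → G_{i+1}(M)`, induced by multiplication by `t`. -/
def muMap (i : ℕ) : Gi R n M i →ₗ[Rn R n] Gi R n M (i + 1) :=
  Submodule.mapQ _ _
    (LinearMap.restrict (LinearMap.lsmul (Rn R n) M (tn R n))
      (fun _ hx => tMi_succ_mem R n M hx))
    (fun x hx => by
      simp only [Submodule.mem_comap] at hx ⊢
      exact tMi_succ_mem R n M hx)

/-- `λ_{i+1} : G^{(i+2)}(M) → G^{(i+1)}(M)`, induced by multiplication by `t`
(with the shifted indexing, `lamMap R n M i : Gup (i+1) → Gup i`). -/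
def lamMap (i : ℕ) : Gup R n M (i + 1) →ₗ[Rn R n] Gup R n M i :=
  Submodule.mapQ _ _
    (LinearMap.restrict (LinearMap.lsmul (Rn R n) M (tn R n))
      (fun _ hx => kt_pred_mem R n M hx))
    (fun x hx => by
      simp only [Submodule.mem_comap] at hx ⊢
      exact kt_pred_mem R n M hx)

/-- The composition `μ_{k-1} ∘ ... ∘ μ_0 : G_0(M) → G_k(M)`. -/
def muComp : (k : ℕ) → (Gi R n M 0 →ₗ[Rn R n] Gi R n M k)
  | 0 => LinearMap.id
  | (k + 1) => (muMap R n M k).comp (muComp k)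

/-- The composition `λ_1 ∘ ... ∘ λ_k : G^{(k+1)}(M) → G^{(1)}(M)`. -/
def lamComp : (k : ℕ) → (Gup R n M k →ₗ[Rn R n] Gup R n M 0)
  | 0 => LinearMap.id
  | (k + 1) => (lamComp k).comp (lamMap R n M k)

end Modules

section Helpers

variable (R : Type*) [CommRing R] (n : ℕ) (M : Type*) [AddCommGroup M] [Module (Rn R n) M]

lemma mem_tMi_iff {i : ℕ} {x : M} : x ∈ tMi R n M i ↔ ∃ m : M, (tn R n)^i • m = x := Iff.rfl

lemma mem_kt_iff {i : ℕ} {x : M} : x ∈ kt R n M i ↔ (tn R n)^i • x = 0 := Iff.rfl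

lemma tn_pow_n_smul (x : M) : (tn R n)^n • x = 0 := by
  have h : (tn R n)^n = 0 := by
    rw [tn, ← map_pow]
    exact Ideal.Quotient.eq_zero_iff_mem.mpr (Ideal.mem_span_singleton_self _)
  rw [h]
  exact zero_smul (Rn R n) x

lemma pow_smul_pow (a b : ℕ) (x : M) :
    (tn R n)^a • (tn R n)^b • x = (tn R n)^(a+b) • x := by
  rw [smul_smul, ← pow_add]

lemma lamMap_mk (i : ℕ) (x : M) (hx : x ∈ kt R n M (i+1+1)) :
    lamMap R n M i (Submodule.Quotient.mk ⟨x, hx⟩) =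
      Submodule.Quotient.mk ⟨tn R n • x, kt_pred_mem R n M hx⟩ := rfl

lemma muMap_mk (i : ℕ) (x : M) (hx : x ∈ tMi R n M i) :
    muMap R n M i (Submodule.Quotient.mk ⟨x, hx⟩) =
      Submodule.Quotient.mk ⟨tn R n • x, tMi_succ_mem R n M hx⟩ := rfl


lemma smul_mem_tMi (k : ℕ) (x : M) : (tn R n)^k • x ∈ tMi R n M k := ⟨x, rfl⟩

lemma pow_smul_mem_kt_one {k : ℕ} {x : M} (hx : x ∈ kt R n M (k+1)) :
    (tn R n)^k • x ∈ kt R n M 1 := by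
  have hx' : (tn R n)^(k+1) • x = 0 := hx
  show (tn R n)^1 • (tn R n)^k • x = 0
  rw [pow_smul_pow, add_comm]
  exact hx'

lemma lamComp_mk (k : ℕ) (x : M) (hx : x ∈ kt R n M (k+1)) :
    lamComp R n M k (Submodule.Quotient.mk ⟨x, hx⟩) =
      Submodule.Quotient.mk ⟨(tn R n)^k • x, pow_smul_mem_kt_one R n M hx⟩ := by
  induction k generalizing x with
  | zero =>
    exact congrArg Submodule.Quotient.mk (Subtype.ext (by
      show x = (tn R n)^0 • x
      rw [pow_zero, one_smul]))
  | succ k ih =>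
    show lamComp R n M k (lamMap R n M k (Submodule.Quotient.mk ⟨x, hx⟩)) = _
    rw [lamMap_mk, ih]
    exact congrArg Submodule.Quotient.mk (Subtype.ext (by
      show (tn R n)^k • tn R n • x = (tn R n)^(k+1) • x
      rw [smul_smul, ← pow_succ]))

lemma muComp_mk (k : ℕ) (x : M) (hx : x ∈ tMi R n M 0) :
    muComp R n M k (Submodule.Quotient.mk ⟨x, hx⟩) =
      Submodule.Quotient.mk ⟨(tn R n)^k • x, smul_mem_tMi R n M k x⟩ := by
  induction k with
  | zero =>
    exact congrArg Submodule.Quotient.mk (Subtype.ext (by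
      show x = (tn R n)^0 • x
      rw [pow_zero, one_smul]))
  | succ k ih =>
    show muMap R n M k (muComp R n M k (Submodule.Quotient.mk ⟨x, hx⟩)) = _
    rw [ih, muMap_mk]
    exact congrArg Submodule.Quotient.mk (Subtype.ext (by
      show tn R n • (tn R n)^k • x = (tn R n)^(k+1) • x
      rw [smul_smul, ← pow_succ']))


lemma lamMap_surj_iff (i : ℕ) :
    Function.Surjective (lamMap R n M i) ↔
      ∀ x : M, (tn R n)^(i+1) • x = 0 →
        ∃ y : M, (tn R n)^(i+2) • y = 0 ∧ (tn R n)^(i+1) • y = (tn R n)^i • x := by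
  constructor
  · intro h x hx
    obtain ⟨g, hg⟩ := h (Submodule.Quotient.mk ⟨x, (show _ ∈ kt R n M (i+1) from hx)⟩)
    obtain ⟨⟨y, hy⟩, rfl⟩ := Submodule.Quotient.mk_surjective _ g
    rw [lamMap_mk, Submodule.Quotient.eq] at hg
    have hg' : (tn R n)^i • (tn R n • y - x) = 0 := hg
    refine ⟨y, hy, ?_⟩
    rw [smul_sub, sub_eq_zero, smul_smul, ← pow_succ] at hg'
    exact hg'
  · intro h g
    obtain ⟨⟨x, hx⟩, rfl⟩ := Submodule.Quotient.mk_surjective _ g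
    obtain ⟨y, hy2, hy⟩ := h x hx
    refine ⟨Submodule.Quotient.mk ⟨y, (show _ ∈ kt R n M (i+1+1) from hy2)⟩, ?_⟩
    rw [lamMap_mk, Submodule.Quotient.eq]
    show (tn R n)^i • (tn R n • y - x) = 0
    rw [smul_sub, smul_smul, ← pow_succ, hy, sub_self]

lemma lamComp_surj_iff (k : ℕ) :
    Function.Surjective (lamComp R n M k) ↔
      ∀ x : M, tn R n • x = 0 →
        ∃ y : M, (tn R n)^(k+1) • y = 0 ∧ (tn R n)^k • y = x := by
  constructor
  · intro h x hx
    have hx1 : x ∈ kt R n M 1 := by show (tn R n)^1 • x = 0; rwa [pow_one]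
    obtain ⟨g, hg⟩ := h (Submodule.Quotient.mk ⟨x, hx1⟩)
    obtain ⟨⟨y, hy⟩, rfl⟩ := Submodule.Quotient.mk_surjective _ g
    rw [lamComp_mk, Submodule.Quotient.eq] at hg
    have hg' : (tn R n)^0 • ((tn R n)^k • y - x) = 0 := hg
    rw [pow_zero, one_smul, sub_eq_zero] at hg'
    exact ⟨y, hy, hg'⟩
  · intro h g
    obtain ⟨⟨x, hx⟩, rfl⟩ := Submodule.Quotient.mk_surjective _ g
    have hx' : tn R n • x = 0 := by
      have h1 : (tn R n)^1 • x = 0 := hx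
      rwa [pow_one] at h1
    obtain ⟨y, hy2, hy⟩ := h x hx'
    refine ⟨Submodule.Quotient.mk ⟨y, (show _ ∈ kt R n M (k+1) from hy2)⟩, ?_⟩
    rw [lamComp_mk, Submodule.Quotient.eq]
    show (tn R n)^0 • ((tn R n)^k • y - x) = 0
    rw [pow_zero, one_smul, hy, sub_self]

lemma muMap_inj_iff (i : ℕ) :
    Function.Injective (muMap R n M i) ↔
      ∀ u : M, (∃ v, (tn R n)^(i+2) • v = (tn R n)^(i+1) • u) →
        ∃ w, (tn R n)^(i+1) • w = (tn R n)^i • u := by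
  constructor
  · intro h u hv
    obtain ⟨v, hv⟩ := hv
    have e : muMap R n M i
        (Submodule.Quotient.mk ⟨(tn R n)^i • u, smul_mem_tMi R n M i u⟩) = 0 := by
      rw [muMap_mk, Submodule.Quotient.mk_eq_zero]
      show tn R n • (tn R n)^i • u ∈ tMi R n M (i+1+1)
      refine ⟨v, ?_⟩
      show (tn R n)^(i+1+1) • v = _
      rw [hv, smul_smul, ← pow_succ']
    have h0 : (Submodule.Quotient.mk ⟨(tn R n)^i • u, smul_mem_tMi R n M i u⟩ :
        Gi R n M i) = 0 := h (by rw [e, map_zero])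
    rw [Submodule.Quotient.mk_eq_zero] at h0
    exact h0
  · intro h
    refine (injective_iff_map_eq_zero _).mpr ?_
    intro a ha
    obtain ⟨⟨x, hx⟩, rfl⟩ := Submodule.Quotient.mk_surjective _ a
    obtain ⟨u, hu⟩ := (mem_tMi_iff R n M).mp hx
    rw [muMap_mk, Submodule.Quotient.mk_eq_zero] at ha
    obtain ⟨v, hv⟩ := ha
    have hvu : (tn R n)^(i+1) • u = tn R n • x := by
      rw [← hu, smul_smul, ← pow_succ']
    obtain ⟨w, hw⟩ := h u ⟨v, by rw [hvu]; exact hv⟩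
    rw [Submodule.Quotient.mk_eq_zero]
    exact ⟨w, hw.trans hu⟩

lemma muComp_inj_iff (k : ℕ) :
    Function.Injective (muComp R n M k) ↔
      ∀ x : M, (∃ v, (tn R n)^(k+1) • v = (tn R n)^k • x) → ∃ w, tn R n • w = x := by
  constructor
  · intro h x hv
    obtain ⟨v, hv⟩ := hv
    have hx0 : x ∈ tMi R n M 0 := ⟨x, by show (tn R n)^0 • x = x; rw [pow_zero, one_smul]⟩
    have e : muComp R n M k (Submodule.Quotient.mk ⟨x, hx0⟩) = 0 := by
      rw [muComp_mk, Submodule.Quotient.mk_eq_zero]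
      exact ⟨v, hv⟩
    have h0 : (Submodule.Quotient.mk ⟨x, hx0⟩ : Gi R n M 0) = 0 := h (by rw [e, map_zero])
    rw [Submodule.Quotient.mk_eq_zero] at h0
    obtain ⟨w, hw⟩ := h0
    refine ⟨w, ?_⟩
    have hw' : (tn R n)^1 • w = x := hw
    rwa [pow_one] at hw'
  · intro h
    refine (injective_iff_map_eq_zero _).mpr ?_
    intro a ha
    obtain ⟨⟨x, hx⟩, rfl⟩ := Submodule.Quotient.mk_surjective _ a
    rw [muComp_mk, Submodule.Quotient.mk_eq_zero] at ha
    obtain ⟨v, hv⟩ := ha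
    obtain ⟨w, hw⟩ := h x ⟨v, hv⟩
    rw [Submodule.Quotient.mk_eq_zero]
    refine ⟨w, ?_⟩
    show (tn R n)^1 • w = x
    rwa [pow_one]

lemma lamMap_injective (i : ℕ) : Function.Injective (lamMap R n M i) := by
  refine (injective_iff_map_eq_zero _).mpr ?_
  intro a ha
  obtain ⟨⟨x, hx⟩, rfl⟩ := Submodule.Quotient.mk_surjective _ a
  rw [lamMap_mk, Submodule.Quotient.mk_eq_zero] at ha
  have ha' : (tn R n)^i • tn R n • x = 0 := ha
  rw [Submodule.Quotient.mk_eq_zero]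
  show (tn R n)^(i+1) • x = 0
  rw [pow_succ, mul_smul]
  exact ha'

lemma muMap_surjective (i : ℕ) : Function.Surjective (muMap R n M i) := by
  intro g
  obtain ⟨⟨z, hz⟩, rfl⟩ := Submodule.Quotient.mk_surjective _ g
  obtain ⟨m, hm⟩ := (mem_tMi_iff R n M).mp hz
  refine ⟨Submodule.Quotient.mk ⟨(tn R n)^i • m, smul_mem_tMi R n M i m⟩, ?_⟩
  rw [muMap_mk]
  exact congrArg Submodule.Quotient.mk (Subtype.ext (by
    show tn R n • (tn R n)^i • m = z
    rw [smul_smul, ← pow_succ']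
    exact hm))

lemma lamComp_injective (k : ℕ) : Function.Injective (lamComp R n M k) := by
  induction k with
  | zero => exact fun a b h => h
  | succ k ih =>
    show Function.Injective ((lamComp R n M k).comp (lamMap R n M k))
    rw [LinearMap.coe_comp]
    exact ih.comp (lamMap_injective R n M k)

lemma muComp_surjective (k : ℕ) : Function.Surjective (muComp R n M k) := by
  induction k with
  | zero => exact fun a => ⟨a, rfl⟩
  | succ k ih =>
    show Function.Surjective ((muMap R n M k).comp (muComp R n M k))
    rw [LinearMap.coe_comp]
    exact (muMap_surjective R n M k).comp ih


lemma core_PQ (m : ℕ)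
    (hP : ∀ x : M, tn R n • x = 0 → ∃ y, (tn R n)^(m+1) • y = x) :
    ∀ k, k ≤ m + 1 → ∀ x : M, (tn R n)^k • x = 0 → ∃ y, tn R n • y = x := by
  intro k
  induction k with
  | zero =>
    intro _ x hx
    rw [pow_zero, one_smul] at hx
    exact ⟨0, by rw [smul_zero, hx]⟩
  | succ k ih =>
    intro hk x hx
    have h1 : tn R n • ((tn R n)^k • x) = 0 := by
      rw [smul_smul, ← pow_succ']
      exact hx
    obtain ⟨w, hw⟩ := hP _ h1
    have hdk : k + (m + 1 - k) = m + 1 := by omega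
    have h2 : (tn R n)^k • (x - (tn R n)^(m+1-k) • w) = 0 := by
      rw [smul_sub, pow_smul_pow, hdk, hw, sub_self]
    obtain ⟨z, hz⟩ := ih (by omega) _ h2
    refine ⟨z + (tn R n)^(m+1-k-1) • w, ?_⟩
    have hd1 : m + 1 - k - 1 + 1 = m + 1 - k := by omega
    have e : tn R n • ((tn R n)^(m+1-k-1) • w) = (tn R n)^(m+1-k) • w := by
      rw [smul_smul, ← pow_succ', hd1]
    rw [smul_add, hz, e, sub_add_cancel]

lemma core_QP (m : ℕ)
    (hQ : ∀ x : M, (tn R n)^(m+1) • x = 0 → ∃ y, tn R n • y = x) :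
    ∀ x : M, tn R n • x = 0 → ∃ y, (tn R n)^(m+1) • y = x := by
  have H : ∀ b a, a + b = m + 1 → ∀ x : M, (tn R n)^a • x = 0 →
      ∃ y, (tn R n)^(b+1) • y = x := by
    intro b
    induction b with
    | zero =>
      intro a ha x hx
      have haa : a = m + 1 := by omega
      subst haa
      obtain ⟨y, hy⟩ := hQ x hx
      exact ⟨y, by rw [pow_one]; exact hy⟩
    | succ b ih =>
      intro a ha x hx
      have h1 : (tn R n)^(a+1) • x = 0 := by
        rw [pow_succ', mul_smul, hx, smul_zero]
      obtain ⟨y, hy⟩ := ih (a+1) (by omega) x h1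
      have h2 : (tn R n)^(m+1) • y = 0 := by
        rw [← ha, ← pow_smul_pow, hy]
        exact hx
      obtain ⟨z, hz⟩ := hQ y h2
      refine ⟨z, ?_⟩
      have e : (tn R n)^(b+1+1) • z = (tn R n)^(b+1) • (tn R n • z) := by
        rw [smul_smul, ← pow_succ]
      rw [e, hz, hy]
  intro x hx
  have h1 : (tn R n)^1 • x = 0 := by rwa [pow_one]
  exact H m 1 (by omega) x h1

end Helpers



/-- For a finitely generated `R[n]`-module `M` (`n ≥ 2`), the following are equivalent:
(i) `𝛌(M) = λ_1 ∘ ... ∘ λ_{n-1} : G^{(n)}(M) → G^{(1)}(M)` is surjective;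
(ii) all the `λ_1, ..., λ_{n-1}` are surjective;
(iii) all the `μ_0, ..., μ_{n-2}` are injective;
(iv) `𝛍(M) = μ_{n-2} ∘ ... ∘ μ_0 : G_0(M) → G_{n-1}(M)` is injective.
Moreover, if these conditions hold, all these maps are isomorphisms.
(Here `lamMap R n M i` is `λ_{i+1}`, `lamComp R n M (n-1)` is `𝛌(M)` and
`muComp R n M (n-1)` is `𝛍(M)`.) -/
theorem balanced_equivalences
    {R : Type*} [CommRing R] [IsDomain R] [IsNoetherianRing R]
    (n : ℕ) (hn : 2 ≤ n)
    (M : Type*) [AddCommGroup M] [Module (Rn R n) M] [Module.Finite (Rn R n) M] :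
    (Function.Surjective (lamComp R n M (n - 1)) ↔
        ∀ i : ℕ, i ≤ n - 2 → Function.Surjective (lamMap R n M i)) ∧
    (Function.Surjective (lamComp R n M (n - 1)) ↔
        ∀ i : ℕ, i ≤ n - 2 → Function.Injective (muMap R n M i)) ∧
    (Function.Surjective (lamComp R n M (n - 1)) ↔
        Function.Injective (muComp R n M (n - 1))) ∧
    (Function.Surjective (lamComp R n M (n - 1)) →
        (∀ i : ℕ, i ≤ n - 2 → Function.Bijective (lamMap R n M i)) ∧
        (∀ i : ℕ, i ≤ n - 2 → Function.Bijective (muMap R n M i)) ∧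
        Function.Bijective (lamComp R n M (n - 1)) ∧
        Function.Bijective (muComp R n M (n - 1))) := by
  obtain ⟨m, rfl⟩ : ∃ m, n = m + 2 := ⟨n - 2, by omega⟩
  clear hn
  have hzero : ∀ x : M, (tn R (m+2))^(m+2) • x = 0 := tn_pow_n_smul R (m+2) M
  -- lamComp surjective ↔ P
  have hLC : Function.Surjective (lamComp R (m+2) M (m+1)) ↔
      (∀ x : M, tn R (m+2) • x = 0 → ∃ y, (tn R (m+2))^(m+1) • y = x) := by
    rw [lamComp_surj_iff]
    constructor
    · intro h x hx
      obtain ⟨y, _, hy⟩ := h x hx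
      exact ⟨y, hy⟩
    · intro h x hx
      obtain ⟨y, hy⟩ := h x hx
      exact ⟨y, hzero y, hy⟩
  -- muComp injective ↔ Q
  have hMC : Function.Injective (muComp R (m+2) M (m+1)) ↔
      (∀ x : M, (tn R (m+2))^(m+1) • x = 0 → ∃ y, tn R (m+2) • y = x) := by
    rw [muComp_inj_iff]
    constructor
    · intro h x hx
      exact h x ⟨0, by rw [smul_zero, hx]⟩
    · intro h x hv
      obtain ⟨v, hv⟩ := hv
      have hx : (tn R (m+2))^(m+1) • x = 0 := by rw [← hv]; exact hzero v
      exact h x hx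
  have hPQ : (∀ x : M, tn R (m+2) • x = 0 → ∃ y, (tn R (m+2))^(m+1) • y = x) →
      (∀ x : M, (tn R (m+2))^(m+1) • x = 0 → ∃ y, tn R (m+2) • y = x) :=
    fun hP => core_PQ R (m+2) M m hP (m+1) le_rfl
  have hQP := core_QP R (m+2) M m
  -- P ↔ all lamMap surjective
  have hLam : (∀ x : M, tn R (m+2) • x = 0 → ∃ y, (tn R (m+2))^(m+1) • y = x) ↔
      (∀ i : ℕ, i ≤ m → Function.Surjective (lamMap R (m+2) M i)) := by
    constructor
    · intro hP i hi
      rw [lamMap_surj_iff]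
      intro x hx
      have h1 : tn R (m+2) • ((tn R (m+2))^i • x) = 0 := by
        rw [smul_smul, ← pow_succ']
        exact hx
      obtain ⟨w, hw⟩ := hP _ h1
      refine ⟨(tn R (m+2))^(m-i) • w, ?_, ?_⟩
      · rw [pow_smul_pow]
        have e : i + 2 + (m - i) = m + 2 := by omega
        rw [e]
        exact hzero w
      · rw [pow_smul_pow]
        have e : i + 1 + (m - i) = m + 1 := by omega
        rw [e]
        exact hw
    · intro hS x hx
      have key : ∀ j, j ≤ m + 1 → ∃ u, (tn R (m+2))^j • u = x := by
        intro j
        induction j with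
        | zero => exact fun _ => ⟨x, by rw [pow_zero, one_smul]⟩
        | succ j ih =>
          intro hj
          obtain ⟨u, hu⟩ := ih (by omega)
          have hu0 : (tn R (m+2))^(j+1) • u = 0 := by
            have hx' := hx
            rw [← hu, smul_smul, ← pow_succ'] at hx'
            exact hx'
          obtain ⟨y, hy2, hy⟩ := (lamMap_surj_iff R (m+2) M j).mp (hS j (by omega)) u hu0
          exact ⟨y, by rw [hy, hu]⟩
      exact key (m+1) le_rfl
  -- Q ↔ all muMap injective
  have hMu : (∀ x : M, (tn R (m+2))^(m+1) • x = 0 → ∃ y, tn R (m+2) • y = x) ↔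
      (∀ i : ℕ, i ≤ m → Function.Injective (muMap R (m+2) M i)) := by
    constructor
    · intro hQ i hi
      have H1 := core_PQ R (m+2) M m (hQP hQ)
      rw [muMap_inj_iff]
      intro u hv
      obtain ⟨v, hv⟩ := hv
      have hv' : (tn R (m+2))^(i+1) • (tn R (m+2) • v) = (tn R (m+2))^(i+1) • u := by
        rw [smul_smul, ← pow_succ]
        exact hv
      have h1 : (tn R (m+2))^(i+1) • (u - tn R (m+2) • v) = 0 := by
        rw [smul_sub, hv', sub_self]
      obtain ⟨z, hz⟩ := H1 (i+1) (by omega) _ h1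
      refine ⟨z + v, ?_⟩
      have e : (tn R (m+2))^(i+1) • (z + v) =
          (tn R (m+2))^i • (tn R (m+2) • (z + v)) := by
        rw [smul_smul, ← pow_succ]
      rw [e, smul_add, hz, sub_add_cancel]
    · intro hC
      have key : ∀ k, k ≤ m + 1 → ∀ x : M, (tn R (m+2))^k • x = 0 →
          ∃ y, tn R (m+2) • y = x := by
        intro k
        induction k with
        | zero =>
          intro _ x hx
          rw [pow_zero, one_smul] at hx
          exact ⟨0, by rw [smul_zero, hx]⟩
        | succ k ih =>
          intro hk x hx
          obtain ⟨w, hw⟩ := (muMap_inj_iff R (m+2) M k).mp (hC k (by omega)) x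
            ⟨0, by rw [smul_zero]; exact hx.symm⟩
          have hw' : (tn R (m+2))^k • (tn R (m+2) • w) = (tn R (m+2))^k • x := by
            rw [smul_smul, ← pow_succ]
            exact hw
          have h2 : (tn R (m+2))^k • (x - tn R (m+2) • w) = 0 := by
            rw [smul_sub, hw', sub_self]
          obtain ⟨z, hz⟩ := ih (by omega) _ h2
          exact ⟨z + w, by rw [smul_add, hz, sub_add_cancel]⟩
      exact key (m+1) le_rfl
  refine ⟨hLC.trans hLam, hLC.trans (Iff.trans ⟨hPQ, hQP⟩ hMu),
    hLC.trans (Iff.trans ⟨hPQ, hQP⟩ hMC.symm), ?_⟩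
  intro hsurj
  have hP := hLC.mp hsurj
  have hQ := hPQ hP
  exact ⟨fun i hi => ⟨lamMap_injective R (m+2) M i, hLam.mp hP i hi⟩,
    fun i hi => ⟨hMu.mp hQ i hi, muMap_surjective R (m+2) M i⟩,
    ⟨lamComp_injective R (m+2) M _, hsurj⟩,
    ⟨hMC.mpr hQ, muComp_surjective R (m+2) M _⟩⟩
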